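/- For t sufficiently large and any i < n, in the polytope cex_n(t), the faces defined by the equality x_i = x_{i+1} and by the equality t^{−u_{i+1}}(Σ_{j≤i} x_j) + t^{−u_{i+2}+1} x_{i+1} = Σ_{j=i+2}^{n−1} t^{−u_j} x_j + x_n + t^{−u_n} are disjoint. -/
import Mathlib


open scoped BigOperators

/-- The exponents `u_k = 3·2^{k−2} − 1` (for `k ≥ 1`). -/
noncomputable def uexp (k : ℕ) : ℝ := 3 * (2 : ℝ) ^ ((k : ℝ) - 2) - 1

/-- Access to the `j`-th coordinate (1-indexed, `1 ≤ j ≤ n`) of a vector in `Fin n`. -/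
def idx (n : ℕ) (hn : 0 < n) (j : ℕ) : Fin n := ⟨(j - 1) % n, Nat.mod_lt _ hn⟩

/-- Feasibility in the polytope `cex_n(t)`. -/
noncomputable def cexFeas (n : ℕ) (hn : 0 < n) (t : ℝ) (x : Fin n → ℝ) : Prop :=
  (∀ i : ℕ, 1 ≤ i → i ≤ n - 1 →
    t ^ (-uexp i) * (∑ j ∈ Finset.Icc 1 (i - 1), x (idx n hn j)) +
        t ^ (-uexp (i + 1) + 1) * x (idx n hn i) ≤
      (∑ j ∈ Finset.Icc (i + 1) (n - 1), t ^ (-uexp j) * x (idx n hn j)) +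
        x (idx n hn n) + t ^ (-uexp n)) ∧
  (∑ j, x j ≤ 1) ∧
  (0 ≤ x (idx n hn 1)) ∧
  (∀ i : ℕ, 1 ≤ i → i ≤ n - 2 → x (idx n hn i) ≤ x (idx n hn (i + 1))) ∧
  (x (idx n hn (n - 1)) ≤ t ^ (uexp n) * x (idx n hn n))

lemma one_le_two_rpow {r : ℝ} (h : 0 ≤ r) : 1 ≤ (2:ℝ) ^ r := by
  calc (1:ℝ) = (2:ℝ) ^ (0:ℝ) := (Real.rpow_zero 2).symm
    _ ≤ (2:ℝ) ^ r := Real.rpow_le_rpow_of_exponent_le one_le_two h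

lemma uexp_mono {a b : ℕ} (h : a ≤ b) : uexp a ≤ uexp b := by
  unfold uexp
  have hc : (a:ℝ) ≤ b := Nat.cast_le.mpr h
  have := Real.rpow_le_rpow_of_exponent_le (one_le_two : (1:ℝ) ≤ 2)
    (by linarith : (a:ℝ) - 2 ≤ (b:ℝ) - 2)
  linarith

lemma uexp_two_le {m : ℕ} (h : 2 ≤ m) : 2 ≤ uexp m := by
  have hc : (2:ℝ) ≤ m := by exact_mod_cast h
  have h1 : 1 ≤ (2:ℝ) ^ ((m:ℝ) - 2) := one_le_two_rpow (by linarith)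
  unfold uexp; linarith

lemma uexp_three_le {m : ℕ} (h : 3 ≤ m) : 3 ≤ uexp m := by
  have hc : (3:ℝ) ≤ m := by exact_mod_cast h
  have h1 : (2:ℝ) ≤ (2:ℝ) ^ ((m:ℝ) - 2) := by
    calc (2:ℝ) = (2:ℝ) ^ (1:ℝ) := (Real.rpow_one 2).symm
      _ ≤ (2:ℝ) ^ ((m:ℝ) - 2) :=
        Real.rpow_le_rpow_of_exponent_le one_le_two (by linarith)
  unfold uexp; linarith

lemma uexp_gap {k : ℕ} (hk : 1 ≤ k) : uexp (k+1) + 1 ≤ uexp (k+2) := by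
  have hk' : (1:ℝ) ≤ k := by exact_mod_cast hk
  have e1 : ((k+1:ℕ):ℝ) - 2 = (k:ℝ) - 1 := by push_cast; ring
  have e2 : ((k+2:ℕ):ℝ) - 2 = ((k:ℝ) - 1) + 1 := by push_cast; ring
  have h1 : 1 ≤ (2:ℝ) ^ ((k:ℝ) - 1) := one_le_two_rpow (by linarith)
  have h2 : (2:ℝ) ^ (((k:ℝ) - 1) + 1) = (2:ℝ) ^ ((k:ℝ) - 1) * 2 :=
    Real.rpow_add_one (by norm_num) _
  unfold uexp
  rw [e1, e2, h2]
  linarith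

/-- for `t` large enough and `1 ≤ i < n`, the faces of `cex_n(t)` defined
by `x_i = x_{i+1}` and by
`t^{−u_{i+1}}(Σ_{j≤i} x_j) + t^{−u_{i+2}+1} x_{i+1} = Σ_{j=i+2}^{n−1} t^{−u_j} x_j + x_n + t^{−u_n}`
are disjoint. -/
theorem stmt16 (n : ℕ) (hn : 2 ≤ n) :
    ∃ t₀ : ℝ, 1 < t₀ ∧ ∀ t : ℝ, t₀ ≤ t → ∀ i : ℕ, 1 ≤ i → i < n →
      ∀ x : Fin n → ℝ, cexFeas n (by omega) t x →
        ¬(x (idx n (by omega) i) = x (idx n (by omega) (i + 1)) ∧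
          t ^ (-uexp (i + 1)) * (∑ j ∈ Finset.Icc 1 i, x (idx n (by omega) j)) +
              t ^ (-uexp (i + 2) + 1) * x (idx n (by omega) (i + 1)) =
            (∑ j ∈ Finset.Icc (i + 2) (n - 1), t ^ (-uexp j) * x (idx n (by omega) j)) +
              x (idx n (by omega) n) + t ^ (-uexp n)) := by
  have hn0 : 0 < n := by omega
  refine ⟨(n:ℝ) + 4, by (have : (0:ℝ) ≤ n := Nat.cast_nonneg n); linarith, ?_⟩
  intro t ht i hi1 hin x hfeas hcon
  have hcast : (0:ℝ) ≤ n := Nat.cast_nonneg n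
  have ht4 : (4:ℝ) ≤ t := by linarith
  have ht1 : (1:ℝ) < t := by linarith
  have ht0 : (0:ℝ) < t := by linarith
  obtain ⟨heq, hE⟩ := hcon
  obtain ⟨h1, _h2, h3, h4, h5⟩ := hfeas
  -- uniform notation
  set y : ℕ → ℝ := fun j => x (idx n hn0 j) with hy
  have heq' : y i = y (i+1) := heq
  have hE' : t ^ (-uexp (i + 1)) * (∑ j ∈ Finset.Icc 1 i, y j) +
      t ^ (-uexp (i + 2) + 1) * y (i + 1) =
      (∑ j ∈ Finset.Icc (i + 2) (n - 1), t ^ (-uexp j) * y j) + y n + t ^ (-uexp n) := hE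
  have h1' : ∀ k : ℕ, 1 ≤ k → k ≤ n - 1 →
      t ^ (-uexp k) * (∑ j ∈ Finset.Icc 1 (k - 1), y j) +
        t ^ (-uexp (k + 1) + 1) * y k ≤
      (∑ j ∈ Finset.Icc (k + 1) (n - 1), t ^ (-uexp j) * y j) + y n + t ^ (-uexp n) := h1
  have h3' : 0 ≤ y 1 := h3
  have h4' : ∀ k : ℕ, 1 ≤ k → k ≤ n - 2 → y k ≤ y (k+1) := h4
  have h5' : y (n-1) ≤ t ^ (uexp n) * y n := h5
  have hrp : ∀ r : ℝ, 0 < t ^ r := fun r => Real.rpow_pos_of_pos ht0 r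
  have hmono : ∀ b, b ≤ n - 1 → ∀ a, 1 ≤ a → a ≤ b → y a ≤ y b := by
    intro b
    induction b with
    | zero => intro _ a ha hab; omega
    | succ m ih =>
      intro hm a ha hab
      rcases eq_or_lt_of_le hab with h | h
      · exact h ▸ le_refl _
      · have hA : y a ≤ y m := ih (by omega) a ha (by omega)
        have hB : y m ≤ y (m+1) := h4' m (by omega) (by omega)
        linarith
  have hnn : ∀ j, 1 ≤ j → j ≤ n - 1 → 0 ≤ y j :=
    fun j hj1 hj2 => le_trans h3' (hmono j hj2 1 le_rfl hj1)
  have hyn : 0 ≤ y n := by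
    by_contra h
    push_neg at h
    have : t ^ (uexp n) * y n < 0 := mul_neg_of_pos_of_neg (hrp _) h
    have := hnn (n-1) (by omega) le_rfl
    linarith
  have hSnn : ∀ m, m ≤ n - 1 → 0 ≤ ∑ j ∈ Finset.Icc 1 m, y j := by
    intro m hm
    apply Finset.sum_nonneg
    intro j hj
    simp only [Finset.mem_Icc] at hj
    exact hnn j hj.1 (le_trans hj.2 hm)
  by_cases hcase : i ≤ n - 2
  · -- case 1 ≤ i ≤ n - 2
    have hC := h1' i hi1 (by omega)
    have hsplit : Finset.Icc (i+1) (n-1) = insert (i+1) (Finset.Icc (i+2) (n-1)) := by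
      ext a
      simp only [Finset.mem_Icc, Finset.mem_insert]
      omega
    rw [hsplit, Finset.sum_insert (by simp [Finset.mem_Icc])] at hC
    have hS : (∑ j ∈ Finset.Icc 1 i, y j) = (∑ j ∈ Finset.Icc 1 (i-1), y j) + y i := by
      have hstep := Finset.sum_Icc_succ_top (show 1 ≤ i - 1 + 1 by omega) y
      have h' : i - 1 + 1 = i := by omega
      rw [h'] at hstep
      exact hstep
    have hyi : 0 < y i := by
      rcases lt_or_eq_of_le (hnn i hi1 (by omega)) with h | h
      · exact h
      · exfalso
        have hz : ∀ j ∈ Finset.Icc 1 i, y j = 0 := by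
          intro j hj
          simp only [Finset.mem_Icc] at hj
          have hA := hmono i (by omega) j hj.1 hj.2
          have hB := hnn j hj.1 (by omega)
          linarith
        have hS0 : (∑ j ∈ Finset.Icc 1 i, y j) = 0 := Finset.sum_eq_zero hz
        have hyi1 : y (i+1) = 0 := by rw [← heq']; linarith
        have htail : 0 ≤ ∑ j ∈ Finset.Icc (i+2) (n-1), t ^ (-uexp j) * y j := by
          apply Finset.sum_nonneg
          intro j hj
          simp only [Finset.mem_Icc] at hj
          exact mul_nonneg (hrp _).le (hnn j (by omega) hj.2)
        rw [hS0, hyi1] at hE'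
        simp only [mul_zero, add_zero, zero_add] at hE'
        have := hrp (-uexp n)
        linarith
    have hmonos : t ^ (-uexp (i+1)) * (∑ j ∈ Finset.Icc 1 (i-1), y j) ≤
        t ^ (-uexp i) * (∑ j ∈ Finset.Icc 1 (i-1), y j) := by
      apply mul_le_mul_of_nonneg_right _ (hSnn (i-1) (by omega))
      apply Real.rpow_le_rpow_of_exponent_le ht1.le
      have := uexp_mono (show i ≤ i + 1 by omega)
      linarith
    have hcoef2 : t ^ (-uexp (i+2) + 1) * y i ≤ t ^ (-uexp (i+1)) * y i := by
      apply mul_le_mul_of_nonneg_right _ hyi.le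
      apply Real.rpow_le_rpow_of_exponent_le ht1.le
      have := uexp_gap (k := i) hi1
      linarith
    have hpow : t ^ (-uexp (i+1) + 1) = t ^ (-uexp (i+1)) * t := by
      rw [Real.rpow_add ht0, Real.rpow_one]
    rw [hS, mul_add] at hE'
    rw [← heq'] at hC hE'
    rw [hpow] at hC
    nlinarith [hC, hE', hmonos, hcoef2, mul_pos (hrp (-uexp (i+1))) hyi,
      mul_nonneg (by linarith : (0:ℝ) ≤ t - 4) (mul_pos (hrp (-uexp (i+1))) hyi).le]
  · -- case i = n - 1
    have hieq : i = n - 1 := by omega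
    subst hieq
    have hn1 : n - 1 + 1 = n := by omega
    have hn2 : n - 1 + 2 = n + 1 := by omega
    rw [hn1] at heq'
    rw [hn1, hn2] at hE'
    have hemp : Finset.Icc (n+1) (n-1) = (∅ : Finset ℕ) := Finset.Icc_eq_empty (by omega)
    rw [hemp, Finset.sum_empty] at hE'
    -- hE' : t^{-u n} * S + t^{-u (n+1) + 1} * y n = 0 + y n + t^{-u n}
    have hSb : (∑ j ∈ Finset.Icc 1 (n-1), y j) ≤ ((n:ℝ) - 1) * y n := by
      have hb : (∑ j ∈ Finset.Icc 1 (n-1), y j) ≤ ∑ _j ∈ Finset.Icc 1 (n-1), y (n-1) := by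
        apply Finset.sum_le_sum
        intro j hj
        simp only [Finset.mem_Icc] at hj
        exact hmono (n-1) le_rfl j hj.1 hj.2
      have hc : (∑ _j ∈ Finset.Icc 1 (n-1), y (n-1)) = ((n:ℝ) - 1) * y n := by
        rw [Finset.sum_const, Nat.card_Icc, heq', nsmul_eq_mul]
        congr 1
        push_cast [Nat.cast_sub (show 1 ≤ n by omega)]
        ring
      linarith
    have hu1 : t ^ (-uexp n) ≤ t ^ (-(2:ℝ)) := by
      apply Real.rpow_le_rpow_of_exponent_le ht1.le
      have := uexp_two_le hn
      linarith
    have hu2 : t ^ (-uexp (n+1) + 1) ≤ t ^ (-(2:ℝ)) := by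
      apply Real.rpow_le_rpow_of_exponent_le ht1.le
      have := uexp_three_le (show 3 ≤ n + 1 by omega)
      linarith
    have hfin : t ^ (-(2:ℝ)) * (n:ℝ) ≤ 1 := by
      have ht2 : t ^ (-(2:ℝ)) = (t ^ (2:ℕ))⁻¹ := by
        rw [Real.rpow_neg ht0.le, show ((2:ℝ)) = ((2:ℕ):ℝ) by norm_num, Real.rpow_natCast]
      have h2p : (0:ℝ) < t ^ (2:ℕ) := by positivity
      have hnt : (n:ℝ) ≤ t ^ (2:ℕ) := by nlinarith
      rw [ht2]
      calc (t ^ (2:ℕ))⁻¹ * (n:ℝ) ≤ (t ^ (2:ℕ))⁻¹ * (t ^ (2:ℕ)) :=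
            mul_le_mul_of_nonneg_left hnt (by positivity)
        _ = 1 := inv_mul_cancel₀ (ne_of_gt h2p)
    have hn1r : (0:ℝ) ≤ (n:ℝ) - 1 := by
      have : (1:ℝ) ≤ n := by exact_mod_cast (show 1 ≤ n by omega)
      linarith
    have P1 := mul_le_mul_of_nonneg_left hSb (hrp (-uexp n)).le
    have P2 := mul_le_mul_of_nonneg_right hu1 (mul_nonneg hn1r hyn)
    have P3 := mul_le_mul_of_nonneg_right hu2 hyn
    have key : y n + t ^ (-uexp n) ≤
        t ^ (-(2:ℝ)) * (((n:ℝ) - 1) * y n) + t ^ (-(2:ℝ)) * y n := by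
      linarith [hE', P1, P2, P3]
    have hring : t ^ (-(2:ℝ)) * (((n:ℝ) - 1) * y n) + t ^ (-(2:ℝ)) * y n =
        (t ^ (-(2:ℝ)) * (n:ℝ)) * y n := by ring
    have P5 : (t ^ (-(2:ℝ)) * (n:ℝ)) * y n ≤ 1 * y n :=
      mul_le_mul_of_nonneg_right hfin hyn
    have := hrp (-uexp n)
    linarith
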